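/- Let H be a subgroup of a countable amenable group G with a fixed system {g_i} of representatives of left cosets of H, and let {W̃_n} be a left Følner sequence in G. Then there exists a Følner sequence {W_n} in G with |W_n △ W̃_n| = o(|W_n|) such that each W_n decomposes as a disjoint union W_n = ⋃_i S_n^i g_i^{-1} with S_n^i ⊂ H, satisfying: for every h ∈ H and ε > 0, the inequality |h S_n^i △ S_n^i| ≤ ε|S_n^i| holds for all sufficiently large n and all i. -/

import Mathlib

open Filter Pointwise

set_option linter.unusedSectionVars false

section Helpers
variable {G : Type*} [Group G] [DecidableEq G] {H : Subgroup G} [DecidablePred (· ∈ H)]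
  {ι : Type*} {g : ι → G}

lemma exu_piece (hreps : ∀ x : G, ∃! i : ι, (g i)⁻¹ * x ∈ H) (w : G) :
    ∃! i : ι, w * g i ∈ H := by
  obtain ⟨i, hi, hu⟩ := hreps w⁻¹
  have key : ∀ j : ι, (w * g j ∈ H ↔ (g j)⁻¹ * w⁻¹ ∈ H) := by
    intro j
    rw [← mul_inv_rev, inv_mem_iff]
  exact ⟨i, (key i).2 hi, fun j hj => hu j ((key j).1 hj)⟩

lemma filter_symmDiff' (p : G → Prop) [DecidablePred p] (A B : Finset G) :
    (symmDiff A B).filter p = symmDiff (A.filter p) (B.filter p) := by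
  ext x; simp only [Finset.mem_symmDiff, Finset.mem_filter]; tauto

lemma piece_smul {x : G} (hx : x ∈ H) (A : Finset G) (i : ι) :
    (x • A).filter (fun w => w * g i ∈ H) = x • (A.filter fun w => w * g i ∈ H) := by
  ext y
  simp only [Finset.mem_filter, Finset.mem_smul_finset]
  constructor
  · rintro ⟨⟨w, hw, rfl⟩, hmem⟩
    refine ⟨w, ⟨hw, ?_⟩, rfl⟩
    rwa [smul_eq_mul, mul_assoc, H.mul_mem_cancel_left hx] at hmem
  · rintro ⟨w, ⟨hw, hmem⟩, rfl⟩
    refine ⟨⟨w, hw, rfl⟩, ?_⟩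
    rwa [smul_eq_mul, mul_assoc, H.mul_mem_cancel_left hx]

lemma Sg_smul {x : G} (hx : x ∈ H) (A : Finset G) (i : ι) :
    x • ((A.filter fun w => w * g i ∈ H).image fun w => w * g i)
      = (((x • A).filter fun w => w * g i ∈ H).image fun w => w * g i) := by
  rw [piece_smul hx, Finset.smul_finset_def, Finset.smul_finset_def, Finset.image_image,
    Finset.image_image]
  congr 1
  ext w
  simp [mul_assoc]
end Helpers
section Helpers2
set_option linter.unusedSectionVars false
variable {G : Type*} [Group G] [DecidableEq G] {H : Subgroup G} [DecidablePred (· ∈ H)]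
  {ι : Type*} {g : ι → G}

lemma card_Sg (A : Finset G) (i : ι) :
    ((A.filter fun w => w * g i ∈ H).image fun w => w * g i).card
      = (A.filter fun w => w * g i ∈ H).card :=
  Finset.card_image_of_injective _ (mul_left_injective (g i))

lemma card_symmDiff_Sg {x : G} (hx : x ∈ H) (A : Finset G) (i : ι) :
    (symmDiff (x • ((A.filter fun w => w * g i ∈ H).image fun w => w * g i))
        ((A.filter fun w => w * g i ∈ H).image fun w => w * g i)).card
      = ((symmDiff (x • A) A).filter fun w => w * g i ∈ H).card := by
  rw [Sg_smul hx, ← Finset.image_symmDiff _ _ (mul_left_injective (g i)),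
    ← filter_symmDiff', Finset.card_image_of_injective _ (mul_left_injective (g i))]
end Helpers2


set_option maxHeartbeats 1000000 in
/-- Lemma 3: given a subgroup `H ≤ G` of a countable amenable group with a fixed system of
left-coset representatives `g i` and a Følner sequence `{W̃ₙ}`, there is a Følner sequence
`{Wₙ}` with `|Wₙ ∆ W̃ₙ| = o(|Wₙ|)` such that the pieces `Sₙⁱ = (Wₙ ∩ H gᵢ⁻¹)·gᵢ ⊆ H` of the
coset decomposition `Wₙ = ⋃ᵢ Sₙⁱ gᵢ⁻¹` satisfy: for every `h ∈ H` and `ε > 0`,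
`|h Sₙⁱ ∆ Sₙⁱ| ≤ ε |Sₙⁱ|` for all sufficiently large `n`, uniformly in `i`. -/
theorem folner_coset_decomposition {G : Type*} [Group G] [Countable G] [DecidableEq G]
    (H : Subgroup G) [DecidablePred (· ∈ H)]
    {ι : Type*} (g : ι → G) (hreps : ∀ x : G, ∃! i : ι, (g i)⁻¹ * x ∈ H)
    (Wt : ℕ → Finset G) (hWtne : ∀ n, (Wt n).Nonempty)
    (hWtFolner : ∀ a : G,
      Tendsto (fun n => ((symmDiff (a • Wt n) (Wt n)).card : ℝ) / (Wt n).card) atTop (nhds 0)) :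
    ∃ W : ℕ → Finset G, (∀ n, (W n).Nonempty) ∧
      (∀ a : G,
        Tendsto (fun n => ((symmDiff (a • W n) (W n)).card : ℝ) / (W n).card) atTop (nhds 0)) ∧
      Tendsto (fun n => ((symmDiff (W n) (Wt n)).card : ℝ) / (W n).card) atTop (nhds 0) ∧
      ∀ h ∈ H, ∀ ε : ℝ, 0 < ε → ∃ N : ℕ, ∀ n ≥ N, ∀ i : ι,
        ((symmDiff (h • (((W n).filter fun w => w * g i ∈ H).image fun w => w * g i))
            (((W n).filter fun w => w * g i ∈ H).image fun w => w * g i)).card : ℝ)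
          ≤ ε * (((W n).filter fun w => w * g i ∈ H).image fun w => w * g i).card := by
  classical
  have exu : ∀ w : G, ∃! i : ι, w * g i ∈ H := exu_piece hreps
  set idx : G → ι := fun w => (exu w).choose with hidxdef
  have hidx1 : ∀ w, w * g (idx w) ∈ H := fun w => (exu w).choose_spec.1
  have hidx2 : ∀ w i, w * g i ∈ H → idx w = i := fun w i hi => ((exu w).choose_spec.2 i hi).symm
  have hidx_iff : ∀ w i, w * g i ∈ H ↔ idx w = i := fun w i =>
    ⟨hidx2 w i, fun hq => hq ▸ hidx1 w⟩
  -- enumeration of H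
  obtain ⟨e, he⟩ := exists_surjective_nat H
  set K : ℕ → Finset G := fun m => (Finset.range m).image (fun k => ((e k : H) : G)) with hKdef
  have hKmem : ∀ m, ∀ x ∈ K m, x ∈ H := by
    intro m x hx
    simp only [hKdef, Finset.mem_image] at hx
    obtain ⟨k, -, rfl⟩ := hx
    exact (e k).2
  have hKfind : ∀ x : G, x ∈ H → ∃ m₀, ∀ m ≥ m₀, x ∈ K m := by
    intro x hx
    obtain ⟨k, hk⟩ := he ⟨x, hx⟩
    exact ⟨k + 1, fun m hm => Finset.mem_image.2 ⟨k, Finset.mem_range.2 (by omega), by rw [hk]⟩⟩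
  -- the scales
  set δ : ℕ → ℝ := fun m => 1 / (m + 2) with hδdef
  have hδpos : ∀ m, 0 < δ m := fun m => by positivity
  have hδhalf : ∀ m, δ m ≤ 1 / 2 := by
    intro m
    rw [hδdef]
    apply one_div_le_one_div_of_le (by norm_num)
    have : (0:ℝ) ≤ (m:ℝ) := Nat.cast_nonneg m
    linarith
  have hδtend : Tendsto δ atTop (nhds 0) := by
    have h1 : Tendsto (fun m : ℕ => ((m : ℝ) + 2)) atTop atTop :=
      tendsto_atTop_add_const_right _ _ tendsto_natCast_atTop_atTop
    rw [hδdef]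
    simp only [one_div]
    exact h1.inv_tendsto_atTop
  have hδsmall : ∀ ε : ℝ, 0 < ε → ∃ m₁, ∀ m ≥ m₁, δ m ≤ ε := by
    intro ε hε
    obtain ⟨m₁, hm₁⟩ := Filter.eventually_atTop.1 (hδtend.eventually (gt_mem_nhds hε))
    exact ⟨m₁, fun m hm => (hm₁ m hm).le⟩
  -- cardinalities of Wt are positive
  have hWtpos : ∀ n, (0:ℝ) < (Wt n).card := by
    intro n
    exact_mod_cast Finset.card_pos.2 (hWtne n)
  -- eventual smallness of symmetric differences, uniformly over K m
  have hP : ∀ m : ℕ, ∃ N : ℕ, ∀ n ≥ N, ∀ x ∈ K m,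
      ((symmDiff (x • Wt n) (Wt n)).card : ℝ) ≤ δ m ^ 2 / (K m).card * (Wt n).card := by
    intro m
    rcases (K m).eq_empty_or_nonempty with hKe | hKne
    · exact ⟨0, fun n _ x hx => absurd hx (by simp [hKe])⟩
    · have hc : (0:ℝ) < δ m ^ 2 / (K m).card := by
        have : (0:ℝ) < (K m).card := by exact_mod_cast Finset.card_pos.2 hKne
        exact div_pos (pow_pos (hδpos m) 2) this
      have hev : ∀ᶠ n in atTop, ∀ x ∈ K m,
          ((symmDiff (x • Wt n) (Wt n)).card : ℝ) ≤ δ m ^ 2 / (K m).card * (Wt n).card := by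
        rw [Filter.eventually_all_finset]
        intro x hx
        filter_upwards [(hWtFolner x).eventually (gt_mem_nhds hc)] with n hn
        have := (div_le_iff₀ (hWtpos n)).1 hn.le
        linarith
      obtain ⟨N, hN⟩ := Filter.eventually_atTop.1 hev
      exact ⟨N, hN⟩
  choose N0 hN0 using hP
  set N1 : ℕ → ℕ := fun m => if m = 0 then 0 else N0 m with hN1def
  have hN1 : ∀ m, ∀ n ≥ N1 m, ∀ x ∈ K m,
      ((symmDiff (x • Wt n) (Wt n)).card : ℝ) ≤ δ m ^ 2 / (K m).card * (Wt n).card := by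
    intro m
    rcases eq_or_ne m 0 with rfl | hm
    · intro n _ x hx
      simp [hKdef] at hx
    · simpa [hN1def, hm] using hN0 m
  set N' : ℕ → ℕ := fun m => (Finset.range (m+1)).sup N1 with hN'def
  have hN'0 : N' 0 = 0 := by simp [hN'def, hN1def]
  have hN'le : ∀ m, N1 m ≤ N' m := fun m => Finset.le_sup (Finset.mem_range.2 (by omega))
  set M : ℕ → ℕ := fun n => Nat.findGreatest (fun m => N' m ≤ n) n with hMdef
  have hMle : ∀ n, N' (M n) ≤ n := by
    intro n
    exact Nat.findGreatest_spec (P := fun m => N' m ≤ n) (Nat.zero_le n)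
      (show N' 0 ≤ n by rw [hN'0]; exact Nat.zero_le n)
  have hMge : ∀ m n, m ≤ n → N' m ≤ n → m ≤ M n := fun m n h1 h2 =>
    Nat.le_findGreatest (P := fun m => N' m ≤ n) h1 h2
  have hMtend : Tendsto M atTop atTop := by
    rw [tendsto_atTop_atTop]
    intro b
    exact ⟨max b (N' b), fun n hn => hMge b n (le_trans (le_max_left _ _) hn)
      (le_trans (le_max_right _ _) hn)⟩
    -- fiber machinery
  have hfiber_eq : ∀ (D : Finset G) (i : ι),
      (D.filter fun w => idx w = i) = (D.filter fun w => w * g i ∈ H) := by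
    intro D i
    ext w
    simp only [Finset.mem_filter]
    exact and_congr_right fun _ => (hidx_iff w i).symm
  have hfibersum : ∀ (D : Finset G) (t : Finset ι),
      (∑ i ∈ t, (D.filter fun w => w * g i ∈ H).card) ≤ D.card := by
    intro D t
    have h1 : (D.filter fun w => idx w ∈ t).card
        = ∑ i ∈ t, ((D.filter fun w => idx w ∈ t).filter fun w => idx w = i).card :=
      Finset.card_eq_sum_card_fiberwise (fun x hx => (Finset.mem_filter.1 hx).2)
    calc ∑ i ∈ t, (D.filter fun w => w * g i ∈ H).card
        = ∑ i ∈ t, ((D.filter fun w => idx w ∈ t).filter fun w => idx w = i).card := by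
          refine Finset.sum_congr rfl fun i hi => ?_
          rw [← hfiber_eq]
          congr 1
          ext w
          simp only [Finset.mem_filter]
          constructor
          · rintro ⟨hw, rfl⟩; exact ⟨⟨hw, hi⟩, rfl⟩
          · rintro ⟨⟨hw, -⟩, rfl⟩; exact ⟨hw, rfl⟩
      _ = (D.filter fun w => idx w ∈ t).card := h1.symm
      _ ≤ D.card := Finset.card_le_card (Finset.filter_subset _ _)
  have hfiberall : ∀ D : Finset G,
      D.card = ∑ i ∈ D.image idx, (D.filter fun w => w * g i ∈ H).card := by
    intro D
    rw [Finset.card_eq_sum_card_fiberwise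
      (f := idx) (t := D.image idx) (fun x hx => Finset.mem_image_of_mem idx hx)]
    exact Finset.sum_congr rfl fun i _ => by rw [hfiber_eq]
  -- the good pieces
  set Good : ℕ → ι → Prop := fun n i =>
    ∀ x ∈ K (M n), (((symmDiff (x • Wt n) (Wt n)).filter fun w => w * g i ∈ H).card : ℝ)
      ≤ δ (M n) * ((Wt n).filter fun w => w * g i ∈ H).card with hGooddef
  set W : ℕ → Finset G := fun n => (Wt n).filter (fun w => Good n (idx w)) with hWdef
  have hWsub : ∀ n, W n ⊆ Wt n := fun n => Finset.filter_subset _ _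
  -- the total bad part is small
  have hbad : ∀ n, (((Wt n).filter fun w => ¬ Good n (idx w)).card : ℝ)
      ≤ δ (M n) * (Wt n).card := by
    intro n
    set B := (Wt n).filter fun w => ¬ Good n (idx w) with hBdef
    set t := B.image idx with htdef
    have hBad_t : ∀ i ∈ t, ¬ Good n i := by
      intro i hi
      obtain ⟨w, hw, rfl⟩ := Finset.mem_image.1 hi
      exact (Finset.mem_filter.1 hw).2
    have hBp : ∀ i ∈ t, (B.filter fun w => w * g i ∈ H)
        = ((Wt n).filter fun w => w * g i ∈ H) := by
      intro i hi
      ext w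
      simp only [hBdef, Finset.mem_filter]
      constructor
      · rintro ⟨⟨hw, -⟩, hm⟩; exact ⟨hw, hm⟩
      · rintro ⟨hw, hm⟩
        exact ⟨⟨hw, by rw [hidx2 w i hm]; exact hBad_t i hi⟩, hm⟩
    have hBcard : (B.card : ℝ) = ∑ i ∈ t, (((Wt n).filter fun w => w * g i ∈ H).card : ℝ) := by
      rw [hfiberall B]
      push_cast
      exact Finset.sum_congr rfl fun i hi => by rw [hBp i hi]
    rcases (K (M n)).eq_empty_or_nonempty with hKe | hKne
    · have hBe : B = ∅ := by
        rw [hBdef, Finset.filter_eq_empty_iff]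
        intro w _
        simp only [hGooddef, hKe]
        intro hcon
        exact hcon (by intro x hx; exact absurd hx (by simp))
      rw [hBe]
      simp only [Finset.card_empty, Nat.cast_zero]
      exact mul_nonneg (hδpos (M n)).le (Nat.cast_nonneg _)
    · have hper : ∀ i ∈ t, δ (M n) * (((Wt n).filter fun w => w * g i ∈ H).card : ℝ)
          ≤ ∑ x ∈ K (M n),
            (((symmDiff (x • Wt n) (Wt n)).filter fun w => w * g i ∈ H).card : ℝ) := by
        intro i hi
        have hng := hBad_t i hi
        simp only [hGooddef] at hng
        push_neg at hng
        obtain ⟨x, hx, hlt⟩ := hng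
        calc δ (M n) * (((Wt n).filter fun w => w * g i ∈ H).card : ℝ)
            ≤ (((symmDiff (x • Wt n) (Wt n)).filter fun w => w * g i ∈ H).card : ℝ) := hlt.le
          _ ≤ _ := Finset.single_le_sum
              (f := fun x => (((symmDiff (x • Wt n) (Wt n)).filter fun w => w * g i ∈ H).card : ℝ))
              (fun y _ => Nat.cast_nonneg _) hx
      have hsum1 : δ (M n) * (B.card : ℝ)
          ≤ ∑ x ∈ K (M n), ((symmDiff (x • Wt n) (Wt n)).card : ℝ) := by
        calc δ (M n) * (B.card : ℝ)
            = ∑ i ∈ t, δ (M n) * (((Wt n).filter fun w => w * g i ∈ H).card : ℝ) := by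
              rw [hBcard, Finset.mul_sum]
          _ ≤ ∑ i ∈ t, ∑ x ∈ K (M n),
              (((symmDiff (x • Wt n) (Wt n)).filter fun w => w * g i ∈ H).card : ℝ) :=
              Finset.sum_le_sum hper
          _ = ∑ x ∈ K (M n), ∑ i ∈ t,
              (((symmDiff (x • Wt n) (Wt n)).filter fun w => w * g i ∈ H).card : ℝ) :=
              Finset.sum_comm
          _ ≤ ∑ x ∈ K (M n), ((symmDiff (x • Wt n) (Wt n)).card : ℝ) := by
              refine Finset.sum_le_sum fun x _ => ?_
              exact_mod_cast hfibersum (symmDiff (x • Wt n) (Wt n)) t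
      have hKpos : (0:ℝ) < (K (M n)).card := by exact_mod_cast Finset.card_pos.2 hKne
      have hsum2 : ∑ x ∈ K (M n), ((symmDiff (x • Wt n) (Wt n)).card : ℝ)
          ≤ (K (M n)).card * (δ (M n) ^ 2 / (K (M n)).card * (Wt n).card) := by
        have hnN : n ≥ N1 (M n) := le_trans (hN'le (M n)) (hMle n)
        calc ∑ x ∈ K (M n), ((symmDiff (x • Wt n) (Wt n)).card : ℝ)
            ≤ ∑ _x ∈ K (M n), (δ (M n) ^ 2 / (K (M n)).card * (Wt n).card) :=
              Finset.sum_le_sum fun x hx => hN1 (M n) n hnN x hx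
          _ = (K (M n)).card * (δ (M n) ^ 2 / (K (M n)).card * (Wt n).card) := by
              rw [Finset.sum_const, nsmul_eq_mul]
      have hfin : δ (M n) * (B.card : ℝ) ≤ δ (M n) ^ 2 * (Wt n).card := by
        refine le_trans (le_trans hsum1 hsum2) (le_of_eq ?_)
        rw [← mul_assoc, mul_div_assoc', mul_comm ((K (M n)).card : ℝ), mul_div_assoc,
          div_self hKpos.ne', mul_one]
      have hδp := hδpos (M n)
      nlinarith [hfin]
    -- basic cardinality consequences
  have hWtWe : ∀ n, Wt n \ W n = (Wt n).filter fun w => ¬ Good n (idx w) := by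
    intro n
    rw [hWdef, Finset.filter_not]
  have hsdWt : ∀ n, symmDiff (W n) (Wt n) = (Wt n).filter fun w => ¬ Good n (idx w) := by
    intro n
    rw [symmDiff_of_le (Finset.le_iff_subset.2 (hWsub n)), ← hWtWe n]
  have hsd : ∀ n, ((symmDiff (W n) (Wt n)).card : ℝ) ≤ δ (M n) * (Wt n).card := by
    intro n
    rw [hsdWt n]
    exact hbad n
  have hWcard2 : ∀ n, ((Wt n).card : ℝ) ≤ 2 * (W n).card := by
    intro n
    have h1 : ((Wt n \ W n).card : ℝ) = (Wt n).card - (W n).card := by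
      rw [Finset.card_sdiff_of_subset (hWsub n), Nat.cast_sub (Finset.card_le_card (hWsub n))]
    have h2 : ((Wt n \ W n).card : ℝ) ≤ δ (M n) * (Wt n).card := by
      rw [hWtWe n]; exact hbad n
    have h3 : δ (M n) * ((Wt n).card : ℝ) ≤ (1/2) * (Wt n).card :=
      mul_le_mul_of_nonneg_right (hδhalf (M n)) (Nat.cast_nonneg _)
    linarith
  have hWpos : ∀ n, (0:ℝ) < (W n).card := fun n => by nlinarith [hWtpos n, hWcard2 n]
  have hWne : ∀ n, (W n).Nonempty := fun n =>
    Finset.card_pos.1 (by exact_mod_cast hWpos n)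
  have hSbound : ∀ n, ((symmDiff (W n) (Wt n)).card : ℝ) ≤ 2 * δ (M n) * (W n).card := by
    intro n
    calc ((symmDiff (W n) (Wt n)).card : ℝ) ≤ δ (M n) * (Wt n).card := hsd n
      _ ≤ δ (M n) * (2 * (W n).card) :=
          mul_le_mul_of_nonneg_left (hWcard2 n) (hδpos (M n)).le
      _ = 2 * δ (M n) * (W n).card := by ring
  have hδMtend : Tendsto (fun n => δ (M n)) atTop (nhds 0) := hδtend.comp hMtend
  have hsdtend : Tendsto (fun n => ((symmDiff (W n) (Wt n)).card : ℝ) / (W n).card)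
      atTop (nhds 0) := by
    refine squeeze_zero (fun n => div_nonneg (Nat.cast_nonneg _) (Nat.cast_nonneg _)) (g := fun n => 2 * δ (M n)) (fun n => ?_) ?_
    · rw [div_le_iff₀ (hWpos n)]
      exact hSbound n
    · simpa using hδMtend.const_mul 2
  -- Følner property of W
  have hWFolner : ∀ a : G, Tendsto
      (fun n => ((symmDiff (a • W n) (W n)).card : ℝ) / (W n).card) atTop (nhds 0) := by
    intro a
    refine squeeze_zero (fun n => div_nonneg (Nat.cast_nonneg _) (Nat.cast_nonneg _))
      (g := fun n => 2 * (((symmDiff (a • Wt n) (Wt n)).card : ℝ) / (Wt n).card) + 4 * δ (M n))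
      (fun n => ?_) ?_
    · rw [div_le_iff₀ (hWpos n)]
      have hsub1 : symmDiff (a • W n) (W n) ⊆
          (symmDiff (a • W n) (a • Wt n) ∪ symmDiff (a • Wt n) (Wt n))
            ∪ symmDiff (Wt n) (W n) := by
        intro x hx
        simp only [Finset.mem_union, Finset.mem_symmDiff] at hx ⊢
        tauto
      have hcard1 : ((symmDiff (a • W n) (W n)).card : ℝ)
          ≤ ((symmDiff (a • W n) (a • Wt n)).card + (symmDiff (a • Wt n) (Wt n)).card)
            + (symmDiff (Wt n) (W n)).card := by
        have h1 := Finset.card_le_card hsub1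
        have h2 := Finset.card_union_le (symmDiff (a • W n) (a • Wt n) ∪ symmDiff (a • Wt n) (Wt n))
          (symmDiff (Wt n) (W n))
        have h3 := Finset.card_union_le (symmDiff (a • W n) (a • Wt n))
          (symmDiff (a • Wt n) (Wt n))
        exact_mod_cast le_trans h1 (le_trans h2 (Nat.add_le_add_right h3 _))
      have e1 : ((symmDiff (a • W n) (a • Wt n)).card : ℝ) = (symmDiff (W n) (Wt n)).card := by
        rw [← Finset.smul_finset_symmDiff, Finset.card_smul_finset]
      have e2 : ((symmDiff (Wt n) (W n)).card : ℝ) = (symmDiff (W n) (Wt n)).card := by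
        rw [symmDiff_comm]
      have hA : ((symmDiff (a • Wt n) (Wt n)).card : ℝ)
          ≤ ((symmDiff (a • Wt n) (Wt n)).card : ℝ) / (Wt n).card * (2 * (W n).card) := by
        have h4 : ((symmDiff (a • Wt n) (Wt n)).card : ℝ) / (Wt n).card * ((Wt n).card : ℝ)
            = (symmDiff (a • Wt n) (Wt n)).card := div_mul_cancel₀ _ (hWtpos n).ne'
        have h5 : (0:ℝ) ≤ ((symmDiff (a • Wt n) (Wt n)).card : ℝ) / (Wt n).card :=
          div_nonneg (Nat.cast_nonneg _) (Nat.cast_nonneg _)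
        calc ((symmDiff (a • Wt n) (Wt n)).card : ℝ)
            = ((symmDiff (a • Wt n) (Wt n)).card : ℝ) / (Wt n).card * (Wt n).card := h4.symm
          _ ≤ _ := mul_le_mul_of_nonneg_left (hWcard2 n) h5
      have hS := hSbound n
      rw [e1, e2] at hcard1
      calc ((symmDiff (a • W n) (W n)).card : ℝ)
          ≤ ((symmDiff (a • Wt n) (Wt n)).card : ℝ)
            + 2 * ((symmDiff (W n) (Wt n)).card : ℝ) := by linarith
        _ ≤ ((symmDiff (a • Wt n) (Wt n)).card : ℝ) / (Wt n).card * (2 * (W n).card)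
            + 2 * (2 * δ (M n) * (W n).card) := by linarith
        _ = (2 * (((symmDiff (a • Wt n) (Wt n)).card : ℝ) / (Wt n).card) + 4 * δ (M n))
            * (W n).card := by ring
    · have := ((hWtFolner a).const_mul 2).add (hδMtend.const_mul 4)
      simpa using this
  refine ⟨W, hWne, hWFolner, hsdtend, ?_⟩
  intro h hh ε hε
  obtain ⟨m₀, hm₀⟩ := hKfind h hh
  obtain ⟨m₁, hm₁⟩ := hδsmall ε hε
  obtain ⟨Nf, hNf⟩ := Filter.eventually_atTop.1 (hMtend.eventually_ge_atTop (max m₀ m₁))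
  refine ⟨Nf, fun n hn i => ?_⟩
  have hM : max m₀ m₁ ≤ M n := hNf n hn
  have hhK : h ∈ K (M n) := hm₀ _ (le_trans (le_max_left _ _) hM)
  have hδε : δ (M n) ≤ ε := hm₁ _ (le_trans (le_max_right _ _) hM)
  rw [card_symmDiff_Sg hh (W n) i, card_Sg]
  by_cases hg : Good n i
  · have hpW : ((W n).filter fun w => w * g i ∈ H) = ((Wt n).filter fun w => w * g i ∈ H) := by
      ext w
      simp only [hWdef, Finset.mem_filter]
      constructor
      · rintro ⟨⟨hw, -⟩, hm⟩; exact ⟨hw, hm⟩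
      · rintro ⟨hw, hm⟩; exact ⟨⟨hw, by rw [hidx2 w i hm]; exact hg⟩, hm⟩
    have hsd_eq : ((symmDiff (h • W n) (W n)).filter fun w => w * g i ∈ H)
        = ((symmDiff (h • Wt n) (Wt n)).filter fun w => w * g i ∈ H) := by
      rw [filter_symmDiff', filter_symmDiff', piece_smul hh, piece_smul hh, hpW]
    rw [hsd_eq, hpW]
    have hgood := hg h hhK
    calc (((symmDiff (h • Wt n) (Wt n)).filter fun w => w * g i ∈ H).card : ℝ)
        ≤ δ (M n) * ((Wt n).filter fun w => w * g i ∈ H).card := hgood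
      _ ≤ ε * ((Wt n).filter fun w => w * g i ∈ H).card :=
          mul_le_mul_of_nonneg_right hδε (Nat.cast_nonneg _)
  · have hpW : ((W n).filter fun w => w * g i ∈ H) = ∅ := by
      rw [Finset.filter_eq_empty_iff]
      intro w hw hm
      have := (Finset.mem_filter.1 hw).2
      rw [hidx2 w i hm] at this
      exact hg this
    rw [filter_symmDiff', piece_smul hh, hpW]
    simp
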